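/- Let m ≥ 2 and let B be a blocker in CK(2m). Then the boundary edges of B form a path of consecutive boundary edges: there exist r ∈ ZMod (2m) and an integer t with 2 ≤ t ≤ m such that the set of boundary edges belonging to B is exactly {{r+ν, r+ν+1} : 0 ≤ ν ≤ t−1}. -/

import Mathlib

def inArc (n : ℕ) (a b z : ZMod n) : Prop :=
  0 < (z - a).val ∧ (z - a).val < (b - a).val

def Cross (n : ℕ) (e f : Sym2 (ZMod n)) : Prop :=
  ∃ a b c d : ZMod n, e = s(a, b) ∧ f = s(c, d) ∧
    a ≠ b ∧ a ≠ c ∧ a ≠ d ∧ b ≠ c ∧ b ≠ d ∧ c ≠ d ∧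
    Xor' (inArc n a b c) (inArc n a b d)

def IsSPM (m : ℕ) (M : Finset (Sym2 (ZMod (2 * m)))) : Prop :=
  M.card = m ∧
  (∀ e ∈ M, ¬ e.IsDiag) ∧
  (∀ v : ZMod (2 * m), ∃! e, e ∈ M ∧ v ∈ e) ∧
  (∀ e ∈ M, ∀ f ∈ M, ¬ Cross (2 * m) e f)

def IsBlockingSet (m : ℕ) (B : Set (Sym2 (ZMod (2 * m)))) : Prop :=
  (∀ e ∈ B, ¬ e.IsDiag) ∧
  ∀ M : Finset (Sym2 (ZMod (2 * m))), IsSPM m M → ∃ e ∈ M, e ∈ B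

def IsBlocker (m : ℕ) (B : Finset (Sym2 (ZMod (2 * m)))) : Prop :=
  IsBlockingSet m (B : Set (Sym2 (ZMod (2 * m)))) ∧ B.card = m

def IsBoundaryEdge (m : ℕ) (e : Sym2 (ZMod (2 * m))) : Prop :=
  ∃ i : ZMod (2 * m), e = s(i, i + 1)

def edgeOrder {n : ℕ} (e : Sym2 (ZMod n)) : ℕ :=
  Sym2.lift ⟨fun i j => min (i - j).val (j - i).val, fun i j => min_comm _ _⟩ e

def edgeSum {n : ℕ} (e : Sym2 (ZMod n)) : ZMod n :=
  Sym2.lift ⟨fun i j => i + j, fun i j => add_comm i j⟩ e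

namespace KP

variable {m : ℕ}

/-- vertex shift is injective on small indices -/
lemma shift_inj (hm : 2 ≤ m) (x : ZMod (2*m)) {i j : ℕ} (hi : i < 2*m) (hj : j < 2*m)
    (h : x + (i:ZMod (2*m)) = x + (j:ZMod (2*m))) : i = j := by
  haveI : NeZero (2*m) := ⟨by omega⟩
  have h2 : (i : ZMod (2*m)) = (j : ZMod (2*m)) := by
    have := add_left_cancel h; exact this
  have h3 : i % (2*m) = j % (2*m) := by
    rw [← ZMod.val_natCast (n := 2*m) i, ← ZMod.val_natCast (n := 2*m) j, h2]
  rwa [Nat.mod_eq_of_lt hi, Nat.mod_eq_of_lt hj] at h3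

lemma val_shift_sub (hm : 2 ≤ m) (x : ZMod (2*m)) (i j : ℕ) (hi : i < 2*m) (hj : j < 2*m) :
    ((x + (i:ZMod (2*m))) - (x + (j:ZMod (2*m)))).val
      = if j ≤ i then i - j else i + 2*m - j := by
  haveI : NeZero (2*m) := ⟨by omega⟩
  have e0 : ((2*m - j : ℕ) : ZMod (2*m)) = - (j : ZMod (2*m)) := by
    rw [Nat.cast_sub (le_of_lt hj), ZMod.natCast_self]; ring
  have e1 : (x + (i:ZMod (2*m))) - (x + (j:ZMod (2*m))) = ((i + (2*m - j) : ℕ) : ZMod (2*m)) := by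
    rw [Nat.cast_add, e0]; ring
  rw [e1, ZMod.val_natCast]
  rcases le_or_gt j i with h | h
  · have : i + (2*m - j) = (i - j) + 2*m := by omega
    rw [this, Nat.add_mod_right, if_pos h, Nat.mod_eq_of_lt (by omega)]
  · rw [if_neg (by omega), Nat.mod_eq_of_lt (by omega)]
    omega

lemma self_shift_val (hm : 2 ≤ m) (x v : ZMod (2*m)) : x + (((v - x).val : ℕ) : ZMod (2*m)) = v := by
  haveI : NeZero (2*m) := ⟨by omega⟩
  have : (((v - x).val : ℕ) : ZMod (2*m)) = v - x := by
    simp [ZMod.natCast_val, ZMod.cast_id]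
  rw [this]; ring

lemma cross_irrefl (n : ℕ) (e : Sym2 (ZMod n)) : ¬ Cross n e e := by
  rintro ⟨a, b, c, d, he, hf, hab, hac, had, hbc, hbd, hcd, _⟩
  rw [he] at hf
  rcases Sym2.eq_iff.1 hf with ⟨h1, h2⟩ | ⟨h1, h2⟩
  · exact hac h1
  · exact had h1

/-- The master SPM construction lemma. -/
lemma master_isSPM (hm : 2 ≤ m) (x : ZMod (2*m)) (F : ℕ → ℕ × ℕ)
    (H1 : ∀ i < m, (F i).1 < (F i).2 ∧ (F i).2 < 2*m)
    (H2 : ∀ v < 2*m, ∃ i, i < m ∧ (v = (F i).1 ∨ v = (F i).2))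
    (H3 : ∀ i < m, ∀ j < m, ∀ v : ℕ, (v = (F i).1 ∨ v = (F i).2) →
            (v = (F j).1 ∨ v = (F j).2) → i = j)
    (H4 : ∀ i < m, ∀ j < m, i ≠ j →
      (F i).2 < (F j).1 ∨ (F j).2 < (F i).1 ∨
      ((F i).1 < (F j).1 ∧ (F j).2 < (F i).2) ∨ ((F j).1 < (F i).1 ∧ (F i).2 < (F j).2)) :
    IsSPM m ((Finset.range m).image
      (fun i => s(x + (((F i).1 : ℕ) : ZMod (2*m)), x + (((F i).2 : ℕ) : ZMod (2*m))))) := by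
  haveI : NeZero (2*m) := ⟨by omega⟩
  set E : ℕ → Sym2 (ZMod (2*m)) :=
    fun i => s(x + (((F i).1 : ℕ) : ZMod (2*m)), x + (((F i).2 : ℕ) : ZMod (2*m))) with hE
  have hb1 : ∀ i < m, (F i).1 < 2*m := fun i hi => lt_trans (H1 i hi).1 (H1 i hi).2
  -- injectivity of E on range m
  have Einj : ∀ i < m, ∀ j < m, E i = E j → i = j := by
    intro i hi j hj h
    rcases Sym2.eq_iff.1 h with ⟨h1, h2⟩ | ⟨h1, h2⟩
    · exact H3 i hi j hj (F i).1 (Or.inl rfl)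
        (Or.inl (shift_inj hm x (hb1 i hi) (hb1 j hj) h1))
    · exact H3 i hi j hj (F i).1 (Or.inl rfl)
        (Or.inr (shift_inj hm x (hb1 i hi) (H1 j hj).2 h1))
  refine ⟨?_, ?_, ?_, ?_⟩
  · rw [Finset.card_image_of_injOn, Finset.card_range]
    intro i hi j hj h
    exact Einj i (Finset.mem_range.1 hi) j (Finset.mem_range.1 hj) h
  · intro e he
    obtain ⟨i, hi, rfl⟩ := Finset.mem_image.1 he
    rw [Finset.mem_range] at hi
    rw [Sym2.mk_isDiag_iff]
    intro h
    have h2 := shift_inj hm x (hb1 i hi) (H1 i hi).2 h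
    have hI := H1 i hi
    omega
  · intro v
    set iv := (v - x).val with hiv
    have hivlt : iv < 2*m := ZMod.val_lt _
    have hxiv : x + ((iv : ℕ) : ZMod (2*m)) = v := self_shift_val hm x v
    obtain ⟨i, hi, hside⟩ := H2 iv hivlt
    refine ⟨E i, ⟨Finset.mem_image.2 ⟨i, Finset.mem_range.2 hi, rfl⟩, ?_⟩, ?_⟩
    · rw [hE]; rw [Sym2.mem_iff]
      rcases hside with h | h
      · left; rw [← hxiv, h]
      · right; rw [← hxiv, h]
    · rintro e' ⟨he', hv'⟩
      obtain ⟨j, hj, rfl⟩ := Finset.mem_image.1 he'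
      rw [Finset.mem_range] at hj
      have : iv = (F j).1 ∨ iv = (F j).2 := by
        rcases Sym2.mem_iff.1 hv' with h | h
        · left; exact (shift_inj hm x hivlt (hb1 j hj) (by rw [hxiv, h])).symm ▸ rfl
        · right; exact (shift_inj hm x hivlt (H1 j hj).2 (by rw [hxiv, h])).symm ▸ rfl
      have := H3 j hj i hi iv this hside
      rw [this]
  · intro e he f hf
    obtain ⟨i, hi, rfl⟩ := Finset.mem_image.1 he
    obtain ⟨j, hj, rfl⟩ := Finset.mem_image.1 hf
    rw [Finset.mem_range] at hi hj
    by_cases hij : i = j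
    · subst hij; exact cross_irrefl _ _
    rintro ⟨a, b, c, d, hab', hcd', hab, hac, had, hbc, hbd, hcd, hx⟩
    have hI := H1 i hi; have hJ := H1 j hj
    have hH4 := H4 i hi j hj hij
    rcases Sym2.eq_iff.1 hab'.symm with ⟨rfl, rfl⟩ | ⟨rfl, rfl⟩ <;>
      rcases Sym2.eq_iff.1 hcd'.symm with ⟨rfl, rfl⟩ | ⟨rfl, rfl⟩ <;>
      · unfold inArc at hx
        rw [val_shift_sub hm, val_shift_sub hm, val_shift_sub hm] at hx <;>
          first
            | (unfold Xor' Xor at hx; split_ifs at hx <;> omega)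
            | omega
            | exact hb1 i hi | exact hI.2 | exact hb1 j hj | exact hJ.2

/-- nested matching of class `c` -/
def Ncl (m : ℕ) (c : ZMod (2*m)) : Finset (Sym2 (ZMod (2*m))) :=
  (Finset.range m).image (fun k : ℕ => s(c - (k:ZMod (2*m)), c + (k:ZMod (2*m)) + 1))

lemma mem_Ncl {c : ZMod (2*m)} {e : Sym2 (ZMod (2*m))} :
    e ∈ Ncl m c ↔ ∃ k, k < m ∧ e = s(c - (k:ZMod (2*m)), c + (k:ZMod (2*m)) + 1) := by
  simp [Ncl, Finset.mem_image, Finset.mem_range, eq_comm]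

lemma two_m_zero (hm : 2 ≤ m) : ((2*m : ℕ) : ZMod (2*m)) = 0 := ZMod.natCast_self _

lemma two_m_zero' (hm : 2 ≤ m) : (2 : ZMod (2*m)) * (m:ℕ) = 0 := by
  have := two_m_zero (m := m) hm; push_cast at this; linear_combination this

lemma isSPM_Ncl (hm : 2 ≤ m) (c : ZMod (2*m)) : IsSPM m (Ncl m c) := by
  have h := master_isSPM hm (c+1) (fun k => (k, 2*m - 1 - k))
    (by intro i hi; dsimp only; omega)
    (by intro v hv; dsimp only
        by_cases h : v < m
        · exact ⟨v, h, Or.inl rfl⟩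
        · exact ⟨2*m - 1 - v, by omega, Or.inr (by omega)⟩)
    (by intro i hi j hj v h1 h2; dsimp only at h1 h2; omega)
    (by intro i hi j hj hij; dsimp only; omega)
  have heq : Ncl m c = (Finset.range m).image
      (fun i => s((c+1) + (((fun k => (k, 2*m - 1 - k)) i).1 : ℕ),
                  (c+1) + ((((fun k => (k, 2*m - 1 - k)) i).2 : ℕ) : ZMod (2*m)))) := by
    apply Finset.image_congr
    intro k hk
    rw [Finset.mem_coe, Finset.mem_range] at hk
    dsimp only
    have h2 : ((2*m - 1 - k : ℕ) : ZMod (2*m)) = -1 - (k:ZMod (2*m)) := by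
      have e1 : (2*m - 1 - k : ℕ) = 2*m - (1 + k) := by omega
      rw [e1, Nat.cast_sub (by omega), two_m_zero hm]
      push_cast; ring
    rw [h2, Sym2.eq_iff]
    right
    constructor <;> ring
  rw [heq]; exact h

lemma Ncl_antipode (hm : 2 ≤ m) (c : ZMod (2*m)) : Ncl m (c + (m:ℕ)) = Ncl m c := by
  haveI : NeZero (2*m) := ⟨by omega⟩
  have h2m := two_m_zero' (m := m) hm
  ext e
  rw [mem_Ncl, mem_Ncl]
  constructor
  · rintro ⟨k, hk, rfl⟩
    refine ⟨m - 1 - k, by omega, ?_⟩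
    have hc : ((m - 1 - k : ℕ) : ZMod (2*m)) = (m:ℕ) - 1 - (k:ZMod (2*m)) := by
      have e1 : (m - 1 - k : ℕ) = m - (1 + k) := by omega
      rw [e1, Nat.cast_sub (by omega)]; push_cast; ring
    rw [hc, Sym2.eq_iff]
    right
    constructor <;> first | ring1 | linear_combination h2m | linear_combination -h2m
  · rintro ⟨k, hk, rfl⟩
    refine ⟨m - 1 - k, by omega, ?_⟩
    have hc : ((m - 1 - k : ℕ) : ZMod (2*m)) = (m:ℕ) - 1 - (k:ZMod (2*m)) := by
      have e1 : (m - 1 - k : ℕ) = m - (1 + k) := by omega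
      rw [e1, Nat.cast_sub (by omega)]; push_cast; ring
    rw [hc, Sym2.eq_iff]
    right
    constructor <;> first | ring1 | linear_combination h2m | linear_combination -h2m

/-- two classes sharing an edge have equal "sум" -/
lemma class_sum_eq (hm : 2 ≤ m) {c c' : ZMod (2*m)} {e : Sym2 (ZMod (2*m))}
    (h1 : e ∈ Ncl m c) (h2 : e ∈ Ncl m c') : 2 * c + 1 = 2 * c' + 1 := by
  obtain ⟨k, hk, rfl⟩ := mem_Ncl.1 h1
  obtain ⟨k', hk', he⟩ := mem_Ncl.1 h2
  rcases Sym2.eq_iff.1 he with ⟨ha, hb⟩ | ⟨ha, hb⟩ <;> linear_combination ha + hb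

lemma natCast_inj_of_lt (hm : 2 ≤ m) {i j : ℕ} (hi : i < 2*m) (hj : j < 2*m)
    (h : (i : ZMod (2*m)) = j) : i = j := by
  haveI : NeZero (2*m) := ⟨by omega⟩
  have h3 := congrArg ZMod.val h
  rw [ZMod.val_natCast, ZMod.val_natCast, Nat.mod_eq_of_lt hi, Nat.mod_eq_of_lt hj] at h3
  exact h3

lemma class_ne (hm : 2 ≤ m) {i j : ℕ} (hi : i < m) (hj : j < m) (hij : i ≠ j) :
    Disjoint (Ncl m ((i:ℕ) : ZMod (2*m))) (Ncl m ((j:ℕ) : ZMod (2*m))) := by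
  rw [Finset.disjoint_left]
  intro e he1 he2
  have := class_sum_eq hm he1 he2
  have h2 : ((2*i+1 : ℕ) : ZMod (2*m)) = ((2*j+1 : ℕ) : ZMod (2*m)) := by
    push_cast; linear_combination this
  have := natCast_inj_of_lt hm (by omega) (by omega) h2
  omega

/-- index family for the dagger-shape SPM -/
def fg1 (a : ℕ) (j : ℕ) : ℕ := if j = 0 then 0 else if j ≤ a then j + 1 else j + a + 1
def fg2 (m a : ℕ) (j : ℕ) : ℕ := if j = 0 then 1 else if j ≤ a then 2*a + 2 - j else 2*m + a - j

lemma isSPM_G (hm : 2 ≤ m) (g : ZMod (2*m)) (a : ℕ) (ha : a < m) :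
    IsSPM m ((Finset.range m).image
      (fun j => s(g + ((fg1 a j : ℕ) : ZMod (2*m)), g + ((fg2 m a j : ℕ) : ZMod (2*m))))) := by
  exact master_isSPM hm g (fun j => (fg1 a j, fg2 m a j))
    (by intro i hi; dsimp only; unfold fg1 fg2; split_ifs <;> omega)
    (by intro v hv; dsimp only
        rcases lt_or_ge v 2 with h1 | h1
        · refine ⟨0, by omega, ?_⟩; unfold fg1 fg2; split_ifs <;> omega
        rcases le_or_gt v (a+1) with h2 | h2
        · refine ⟨v - 1, by omega, ?_⟩; unfold fg1 fg2; split_ifs <;> omega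
        rcases le_or_gt v (2*a+1) with h3 | h3
        · refine ⟨2*a + 2 - v, by omega, ?_⟩; unfold fg1 fg2; split_ifs <;> omega
        rcases le_or_gt v (a + m) with h4 | h4
        · refine ⟨v - a - 1, by omega, ?_⟩; unfold fg1 fg2; split_ifs <;> omega
        · refine ⟨2*m + a - v, by omega, ?_⟩; unfold fg1 fg2; split_ifs <;> omega)
    (by intro i hi j hj v h1 h2; dsimp only at h1 h2; unfold fg1 fg2 at h1 h2
        split_ifs at h1 h2 <;> omega)
    (by intro i hi j hj hij; dsimp only; unfold fg1 fg2; split_ifs <;> omega)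

lemma val_cast_self (hm : 2 ≤ m) (c : ZMod (2*m)) : ((c.val : ℕ) : ZMod (2*m)) = c := by
  haveI : NeZero (2*m) := ⟨by omega⟩
  simp [ZMod.natCast_val, ZMod.cast_id]

lemma edge_param_inj (hm : 2 ≤ m) {c : ZMod (2*m)} {k k' : ℕ} (hk : k < m) (hk' : k' < m)
    (h : s(c - (k:ZMod (2*m)), c + (k:ZMod (2*m)) + 1) = s(c - (k':ZMod (2*m)), c + (k':ZMod (2*m)) + 1)) :
    k = k' := by
  rcases Sym2.eq_iff.1 h with ⟨h1, _⟩ | ⟨h1, h2⟩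
  · have : (k : ZMod (2*m)) = (k' : ZMod (2*m)) := by linear_combination -h1
    exact natCast_inj_of_lt hm (by omega) (by omega) this
  · exfalso
    have : ((k + k' + 1 : ℕ) : ZMod (2*m)) = ((0:ℕ) : ZMod (2*m)) := by
      push_cast; linear_combination -h1
    have := natCast_inj_of_lt hm (by omega) (by omega) this
    omega

lemma exists_unique_edge (hm : 2 ≤ m) (B : Finset (Sym2 (ZMod (2*m)))) (hB : IsBlocker m B)
    (c : ZMod (2*m)) : ∃! e, e ∈ B ∧ e ∈ Ncl m c := by
  haveI : NeZero (2*m) := ⟨by omega⟩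
  have hit : ∀ c' : ZMod (2*m), ∃ e ∈ Ncl m c', e ∈ B :=
    fun c' => hB.1.2 (Ncl m c') (isSPM_Ncl hm c')
  set S : ℕ → Finset (Sym2 (ZMod (2*m))) := fun i => B ∩ Ncl m ((i:ℕ) : ZMod (2*m)) with hS
  have hdisj : ∀ i ∈ Finset.range m, ∀ j ∈ Finset.range m, i ≠ j → Disjoint (S i) (S j) := by
    intro i hi j hj hij
    have := class_ne hm (Finset.mem_range.1 hi) (Finset.mem_range.1 hj) hij
    exact Finset.disjoint_left.2 fun e he1 he2 =>
      Finset.disjoint_left.1 this (Finset.mem_inter.1 he1).2 (Finset.mem_inter.1 he2).2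
  have hnon : ∀ i ∈ Finset.range m, 1 ≤ (S i).card := by
    intro i _
    obtain ⟨e, h1, h2⟩ := hit ((i:ℕ) : ZMod (2*m))
    exact Finset.card_pos.2 ⟨e, Finset.mem_inter.2 ⟨h2, h1⟩⟩
  have hsum : ∑ i ∈ Finset.range m, (S i).card ≤ m := by
    rw [← Finset.card_biUnion hdisj]
    refine le_trans (Finset.card_le_card ?_) (le_of_eq hB.2)
    intro e he
    obtain ⟨i, _, hei⟩ := Finset.mem_biUnion.1 he
    exact (Finset.mem_inter.1 hei).1
  have hone : ∀ i ∈ Finset.range m, (S i).card = 1 := by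
    by_contra hcon
    push_neg at hcon
    obtain ⟨i₀, hi₀, hne⟩ := hcon
    have hlt : m < ∑ i ∈ Finset.range m, (S i).card := by
      calc m = ∑ _i ∈ Finset.range m, 1 := by simp
      _ < ∑ i ∈ Finset.range m, (S i).card :=
          Finset.sum_lt_sum hnon ⟨i₀, hi₀, by have := hnon i₀ hi₀; omega⟩
    omega
  have main : ∀ i : ℕ, i < m → ∃! e, e ∈ B ∧ e ∈ Ncl m ((i:ℕ) : ZMod (2*m)) := by
    intro i him
    obtain ⟨e, he⟩ := Finset.card_eq_one.1 (hone i (Finset.mem_range.2 him))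
    have hmem : e ∈ S i := he ▸ Finset.mem_singleton_self e
    refine ⟨e, ⟨(Finset.mem_inter.1 hmem).1, (Finset.mem_inter.1 hmem).2⟩, ?_⟩
    rintro e' ⟨h1, h2⟩
    have : e' ∈ S i := Finset.mem_inter.2 ⟨h1, h2⟩
    rw [he] at this
    exact Finset.mem_singleton.1 this
  rcases lt_or_ge c.val m with h | h
  · have hc : ((c.val : ℕ) : ZMod (2*m)) = c := val_cast_self hm c
    have := main c.val h
    rwa [hc] at this
  · have h2 : c.val - m < m := by have := ZMod.val_lt c; omega
    have hc : ((c.val - m : ℕ) : ZMod (2*m)) + ((m:ℕ) : ZMod (2*m)) = c := by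
      rw [← Nat.cast_add]
      have : c.val - m + m = c.val := by omega
      rw [this]
      exact val_cast_self hm c
    have := main (c.val - m) h2
    rwa [← Ncl_antipode hm (((c.val - m : ℕ) : ZMod (2*m))), hc] at this

lemma exists_unique_k (hm : 2 ≤ m) (B : Finset (Sym2 (ZMod (2*m)))) (hB : IsBlocker m B)
    (c : ZMod (2*m)) :
    ∃! k, k < m ∧ s(c - (k:ZMod (2*m)), c + (k:ZMod (2*m)) + 1) ∈ B := by
  obtain ⟨e, ⟨heB, heN⟩, hu⟩ := exists_unique_edge hm B hB c
  obtain ⟨k, hk, rfl⟩ := mem_Ncl.1 heN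
  refine ⟨k, ⟨hk, heB⟩, ?_⟩
  rintro k' ⟨hk', hB'⟩
  have he' : s(c - (k':ZMod (2*m)), c + (k':ZMod (2*m)) + 1) ∈ Ncl m c := mem_Ncl.2 ⟨k', hk', rfl⟩
  exact edge_param_inj hm hk' hk (hu _ ⟨hB', he'⟩)

noncomputable def Klev (hm : 2 ≤ m) (B : Finset (Sym2 (ZMod (2*m)))) (hB : IsBlocker m B)
    (c : ZMod (2*m)) : ℕ :=
  (exists_unique_k hm B hB c).exists.choose

lemma Klev_spec (hm : 2 ≤ m) (B : Finset (Sym2 (ZMod (2*m)))) (hB : IsBlocker m B)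
    (c : ZMod (2*m)) :
    Klev hm B hB c < m ∧
      s(c - ((Klev hm B hB c : ℕ) : ZMod (2*m)), c + ((Klev hm B hB c : ℕ) : ZMod (2*m)) + 1) ∈ B :=
  (exists_unique_k hm B hB c).exists.choose_spec

lemma Klev_eq (hm : 2 ≤ m) (B : Finset (Sym2 (ZMod (2*m)))) (hB : IsBlocker m B)
    {c : ZMod (2*m)} {k : ℕ} (hk : k < m)
    (hmem : s(c - (k : ZMod (2*m)), c + (k : ZMod (2*m)) + 1) ∈ B) :
    Klev hm B hB c = k := by
  obtain ⟨k₀, hk₀, hu⟩ := exists_unique_k hm B hB c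
  have h1 := hu _ (Klev_spec hm B hB c)
  have h2 := hu _ ⟨hk, hmem⟩
  rw [h1, h2]

lemma Klev_rel (hm : 2 ≤ m) (B : Finset (Sym2 (ZMod (2*m)))) (hB : IsBlocker m B)
    (c : ZMod (2*m)) :
    Klev hm B hB (c + ((m:ℕ) : ZMod (2*m))) = m - 1 - Klev hm B hB c := by
  obtain ⟨hlt, hmem⟩ := Klev_spec hm B hB c
  set k := Klev hm B hB c
  have h2m := two_m_zero' (m := m) hm
  apply Klev_eq hm B hB (by omega)
  have hc : ((m - 1 - k : ℕ) : ZMod (2*m)) = ((m:ℕ) : ZMod (2*m)) - 1 - (k : ZMod (2*m)) := by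
    have e1 : (m - 1 - k : ℕ) = m - (1 + k) := by omega
    rw [e1, Nat.cast_sub (by omega)]; push_cast; ring
  rw [hc]
  have he : s((c + ((m:ℕ):ZMod (2*m))) - (((m:ℕ):ZMod (2*m)) - 1 - (k:ZMod (2*m))),
      (c + ((m:ℕ):ZMod (2*m))) + (((m:ℕ):ZMod (2*m)) - 1 - (k:ZMod (2*m))) + 1)
      = s(c - (k:ZMod (2*m)), c + (k:ZMod (2*m)) + 1) := by
    rw [Sym2.eq_iff]
    right
    constructor <;> first | ring1 | linear_combination h2m | linear_combination -h2m
  rw [he]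
  exact hmem

lemma Klev_dagger (hm : 2 ≤ m) (B : Finset (Sym2 (ZMod (2*m)))) (hB : IsBlocker m B)
    (c : ZMod (2*m)) (a : ℕ) (h1 : Klev hm B hB (c - 1) ≤ a) (h2 : a ≤ Klev hm B hB c) :
    Klev hm B hB (c - 1 - (a : ZMod (2*m))) = 0 := by
  have ham : a < m := lt_of_le_of_lt h2 (Klev_spec hm B hB c).1
  have h2m := two_m_zero' (m := m) hm
  set g : ZMod (2*m) := c - 1 - (a : ZMod (2*m)) with hg
  have hcg : c = g + (a : ZMod (2*m)) + 1 := by rw [hg]; ring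
  obtain ⟨e, heM, heB⟩ := hB.1.2 _ (isSPM_G hm g a ham)
  obtain ⟨j, hj, rfl⟩ := Finset.mem_image.1 heM
  rw [Finset.mem_range] at hj
  by_cases hj0 : j = 0
  · subst hj0
    apply Klev_eq hm B hB (k := 0) (by omega)
    have he : s(g - ((0:ℕ) : ZMod (2*m)), g + ((0:ℕ):ZMod (2*m)) + 1)
        = s(g + ((fg1 a 0 : ℕ) : ZMod (2*m)), g + ((fg2 m a 0 : ℕ) : ZMod (2*m))) := by
      unfold fg1 fg2
      rw [if_pos rfl, if_pos rfl, Sym2.eq_iff]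
      left
      constructor <;> push_cast <;> ring
    rw [he]
    exact heB
  by_cases hja : j ≤ a
  · exfalso
    have hf1 : fg1 a j = j + 1 := by unfold fg1; rw [if_neg hj0, if_pos hja]
    have hf2 : fg2 m a j = 2*a + 2 - j := by unfold fg2; rw [if_neg hj0, if_pos hja]
    rw [hf1, hf2] at heB
    have hKc : Klev hm B hB c = a - j := by
      apply Klev_eq hm B hB (k := a - j) (by omega)
      have he : s(c - ((a - j : ℕ) : ZMod (2*m)), c + ((a - j : ℕ) : ZMod (2*m)) + 1)
          = s(g + ((j + 1 : ℕ) : ZMod (2*m)), g + ((2*a + 2 - j : ℕ) : ZMod (2*m))) := by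
        rw [Nat.cast_sub hja, Nat.cast_sub (by omega : j ≤ 2*a + 2), hcg, Sym2.eq_iff]
        left
        constructor <;> push_cast <;> ring
      rw [he]
      exact heB
    omega
  · exfalso
    push_neg at hja
    have hf1 : fg1 a j = j + a + 1 := by unfold fg1; rw [if_neg hj0, if_neg (by omega)]
    have hf2 : fg2 m a j = 2*m + a - j := by unfold fg2; rw [if_neg hj0, if_neg (by omega)]
    rw [hf1, hf2] at heB
    have hKc : Klev hm B hB (c - 1) = j := by
      apply Klev_eq hm B hB (k := j) hj
      have he : s((c - 1) - (j : ZMod (2*m)), (c - 1) + (j : ZMod (2*m)) + 1)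
          = s(g + ((j + a + 1 : ℕ) : ZMod (2*m)), g + ((2*m + a - j : ℕ) : ZMod (2*m))) := by
        rw [Nat.cast_sub (by omega : j ≤ 2*m + a), hcg, Sym2.eq_iff]
        right
        constructor <;> push_cast <;>
          first | ring1 | linear_combination h2m | linear_combination -h2m
      rw [he]
      exact heB
    omega

lemma core (hm : 2 ≤ m) (K : ZMod (2*m) → ℕ)
    (hrel : ∀ c, K (c + ((m:ℕ) : ZMod (2*m))) = m - 1 - K c)
    (hdag : ∀ (c : ZMod (2*m)) (a : ℕ), K (c - 1) ≤ a → a ≤ K c →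
      K (c - 1 - (a : ZMod (2*m))) = 0) :
    ∃ (r : ZMod (2*m)) (t : ℕ), 2 ≤ t ∧ t ≤ m ∧
      ∀ c : ZMod (2*m), (K c = 0 ↔ ∃ ν : ℕ, ν < t ∧ c = r + (ν : ZMod (2*m))) := by
  haveI : NeZero (2*m) := ⟨by omega⟩
  classical
  have h2m := two_m_zero' (m := m) hm
  -- the cascade
  have casc : ∀ (z : ZMod (2*m)), K z = 0 →
      ∀ j : ℕ, 1 ≤ j → j ≤ K (z + (j : ZMod (2*m))) → K (z - 1) = 0 := by
    intro z hz j
    induction j using Nat.strong_induction_on with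
    | _ j ih =>
      intro hj1 hjK
      by_cases hsm : ∃ j', j' < j ∧ 1 ≤ j' ∧ j' ≤ K (z + (j' : ZMod (2*m)))
      · obtain ⟨j', ha, hb, hc⟩ := hsm
        exact ih j' ha hb hc
      push_neg at hsm
      have hpre : K ((z + (j : ZMod (2*m))) - 1) ≤ j := by
        have hz1 : (z + (j : ZMod (2*m))) - 1 = z + ((j - 1 : ℕ) : ZMod (2*m)) := by
          rw [Nat.cast_sub hj1]; push_cast; ring
        rw [hz1]
        rcases Nat.eq_or_lt_of_le hj1 with h | h
        · have h0 : ((j - 1 : ℕ) : ZMod (2*m)) = 0 := by rw [← h]; norm_num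
          rw [h0, add_zero, hz]; omega
        · have := hsm (j - 1) (by omega) (by omega)
          omega
      have hd := hdag (z + (j : ZMod (2*m))) j hpre hjK
      have harith : (z + (j : ZMod (2*m))) - 1 - (j : ZMod (2*m)) = z - 1 := by ring
      rwa [harith] at hd
  have noasc : ∀ z : ZMod (2*m), K z = 0 → K (z - 1) ≠ 0 →
      ∀ j : ℕ, 1 ≤ j → K (z + (j : ZMod (2*m))) < j := by
    intro z hz hz1 j hj
    by_contra h
    exact hz1 (casc z hz j hj (by omega))
  -- building a run start from any zero of K
  have mkstart : ∀ p : ZMod (2*m), K p = 0 →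
      ∃ (z : ZMod (2*m)) (j₀ : ℕ), K z = 0 ∧ K (z - 1) ≠ 0 ∧ p = z + (j₀ : ZMod (2*m)) ∧
        ∀ i : ℕ, i ≤ j₀ → K (z + (i : ZMod (2*m))) = 0 := by
    intro p hp
    have hex : ∃ i : ℕ, K (p - ((i + 1 : ℕ) : ZMod (2*m))) ≠ 0 := by
      refine ⟨m - 1, ?_⟩
      have hc : ((m - 1 + 1 : ℕ) : ZMod (2*m)) = ((m:ℕ) : ZMod (2*m)) := by congr 1; omega
      have hneg : p - ((m:ℕ) : ZMod (2*m)) = p + ((m:ℕ) : ZMod (2*m)) := by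
        linear_combination -h2m
      rw [hc, hneg, hrel, hp]
      omega
    set i₀ := Nat.find hex with hi₀
    have hfind : K (p - ((i₀ + 1 : ℕ) : ZMod (2*m))) ≠ 0 := Nat.find_spec hex
    have hz0 : K (p - ((i₀ : ℕ) : ZMod (2*m))) = 0 := by
      rcases Nat.eq_zero_or_pos i₀ with h | h
      · rw [h, Nat.cast_zero, sub_zero]; exact hp
      · have hmin := Nat.find_min hex (m := i₀ - 1) (by omega)
        have hc : ((i₀ - 1 + 1 : ℕ) : ZMod (2*m)) = ((i₀:ℕ) : ZMod (2*m)) := by congr 1; omega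
        rw [hc] at hmin
        exact not_not.1 hmin
    refine ⟨p - ((i₀ : ℕ) : ZMod (2*m)), i₀, hz0, ?_, by ring, ?_⟩
    · have hc : p - ((i₀:ℕ):ZMod (2*m)) - 1 = p - ((i₀ + 1 : ℕ) : ZMod (2*m)) := by
        push_cast; ring
      rw [hc]; exact hfind
    · intro i hi
      have hcast : p - ((i₀:ℕ):ZMod (2*m)) + (i : ZMod (2*m))
          = p - (((i₀ - i : ℕ)) : ZMod (2*m)) := by
        rw [Nat.cast_sub hi]; ring
      rw [hcast]
      rcases Nat.eq_zero_or_pos (i₀ - i) with h | h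
      · rw [h, Nat.cast_zero, sub_zero]; exact hp
      · have hmin := Nat.find_min hex (m := i₀ - i - 1) (by omega)
        have hc : ((i₀ - i - 1 + 1 : ℕ) : ZMod (2*m)) = ((i₀ - i :ℕ) : ZMod (2*m)) := by
          congr 1; omega
        rw [hc] at hmin
        exact not_not.1 hmin
  -- existence of a zero
  obtain ⟨c₀, -, hc₀⟩ := Finset.exists_max_image (Finset.univ : Finset (ZMod (2*m))) K
    ⟨0, Finset.mem_univ 0⟩
  have hp₀ : K (c₀ - 1 - ((K c₀ : ℕ) : ZMod (2*m))) = 0 :=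
    hdag c₀ (K c₀) (hc₀ _ (Finset.mem_univ _)) le_rfl
  obtain ⟨z, j₀, hz, hz1, -, -⟩ := mkstart _ hp₀
  -- define t
  have hexT : ∃ j : ℕ, K (z + ((j + 1 : ℕ) : ZMod (2*m))) ≠ 0 := by
    refine ⟨m - 1, ?_⟩
    have hc : ((m - 1 + 1 : ℕ) : ZMod (2*m)) = ((m:ℕ) : ZMod (2*m)) := by congr 1; omega
    rw [hc, hrel, hz]
    omega
  set i₁ := Nat.find hexT with hi₁
  have hKt : K (z + ((i₁ + 1 : ℕ) : ZMod (2*m))) ≠ 0 := Nat.find_spec hexT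
  have hKlt' : ∀ j : ℕ, j < i₁ + 1 → K (z + (j : ZMod (2*m))) = 0 := by
    intro j hj
    rcases Nat.eq_zero_or_pos j with h | h
    · rw [h, Nat.cast_zero, add_zero]; exact hz
    · have hmin := Nat.find_min hexT (m := j - 1) (by omega)
      have hc : ((j - 1 + 1 : ℕ) : ZMod (2*m)) = ((j:ℕ) : ZMod (2*m)) := by congr 1; omega
      rw [hc] at hmin
      exact not_not.1 hmin
  have ht2 : 2 ≤ i₁ + 1 := by
    have h1 : K (z + ((1:ℕ) : ZMod (2*m))) < 1 := noasc z hz hz1 1 le_rfl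
    have h2 : i₁ ≠ 0 := by
      intro h0
      apply hKt
      rw [h0]
      norm_num at h1 ⊢
      omega
    omega
  have htm : i₁ + 1 ≤ m := by
    have : i₁ ≤ m - 1 := Nat.find_le (by
      have hc : ((m - 1 + 1 : ℕ) : ZMod (2*m)) = ((m:ℕ) : ZMod (2*m)) := by congr 1; omega
      rw [hc, hrel, hz]
      omega)
    omega
  -- uniqueness of run starts
  have hKm : K (z + ((m:ℕ) : ZMod (2*m))) = m - 1 := by rw [hrel, hz]; omega
  have uniq : ∀ z' : ZMod (2*m), K z' = 0 → K (z' - 1) ≠ 0 → z' = z := by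
    intro z' hz' hz1'
    by_contra hne
    set d := (z' - z).val with hd
    have hdlt : d < 2*m := ZMod.val_lt _
    have hdpos : 0 < d := by
      rcases Nat.eq_zero_or_pos d with h | h
      · exfalso
        apply hne
        have : z' - z = 0 := (ZMod.val_eq_zero _).1 h
        linear_combination this
      · exact h
    have hz'z : z' = z + ((d:ℕ) : ZMod (2*m)) := by
      rw [hd]
      have : (((z' - z).val : ℕ) : ZMod (2*m)) = z' - z := by
        simp [ZMod.natCast_val, ZMod.cast_id]
      rw [this]; ring
    have hKm' : K (z' + ((m:ℕ) : ZMod (2*m))) = m - 1 := by rw [hrel, hz']; omega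
    rcases lt_trichotomy d m with h | h | h
    · have harith : z' + ((m - d : ℕ) : ZMod (2*m)) = z + ((m:ℕ) : ZMod (2*m)) := by
        rw [hz'z, Nat.cast_sub (le_of_lt h)]; ring
      have hlt := noasc z' hz' hz1' (m - d) (by omega)
      rw [harith, hKm] at hlt
      omega
    · have he : z' = z + ((m:ℕ) : ZMod (2*m)) := by rw [hz'z, h]
      rw [he, hKm] at hz'
      omega
    · have harith : z + ((d - m : ℕ) : ZMod (2*m)) = z' + ((m:ℕ) : ZMod (2*m)) := by
        rw [hz'z, Nat.cast_sub (by omega)]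
        first | linear_combination h2m | linear_combination -h2m
      have hlt := noasc z hz hz1 (d - m) (by omega)
      rw [harith, hKm'] at hlt
      omega
  refine ⟨z, i₁ + 1, ht2, htm, ?_⟩
  intro c
  constructor
  · intro hc
    obtain ⟨z₂, j₂, hz₂, hz₂1, hcz₂, hall⟩ := mkstart c hc
    have hz₂z : z₂ = z := uniq z₂ hz₂ hz₂1
    rw [hz₂z] at hcz₂ hall
    have hj₂t : j₂ < i₁ + 1 := by
      by_contra hge
      push_neg at hge
      exact hKt (hall (i₁ + 1) hge)
    exact ⟨j₂, hj₂t, hcz₂⟩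
  · rintro ⟨ν, hν, rfl⟩
    exact hKlt' ν hν

end KP

theorem boundary_edges_consecutive (m : ℕ) (hm : 2 ≤ m)
    (B : Finset (Sym2 (ZMod (2 * m)))) (hB : IsBlocker m B) :
    ∃ (r : ZMod (2 * m)) (t : ℕ), 2 ≤ t ∧ t ≤ m ∧
      ∀ e : Sym2 (ZMod (2 * m)),
        (e ∈ B ∧ IsBoundaryEdge m e) ↔
          ∃ ν : ℕ, ν < t ∧ e = s(r + (ν : ZMod (2 * m)), r + (ν : ZMod (2 * m)) + 1) := by
  obtain ⟨r, t, ht2, htm, hiff⟩ := KP.core hm (KP.Klev hm B hB)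
    (KP.Klev_rel hm B hB) (KP.Klev_dagger hm B hB)
  refine ⟨r, t, ht2, htm, ?_⟩
  intro e
  constructor
  · rintro ⟨heB, i, rfl⟩
    have h0 : KP.Klev hm B hB i = 0 := by
      apply KP.Klev_eq hm B hB (k := 0) (by omega)
      simpa using heB
    obtain ⟨ν, hν, hi⟩ := (hiff i).1 h0
    exact ⟨ν, hν, by rw [hi]⟩
  · rintro ⟨ν, hν, rfl⟩
    refine ⟨?_, ⟨r + (ν : ZMod (2 * m)), rfl⟩⟩
    have h0 : KP.Klev hm B hB (r + (ν : ZMod (2 * m))) = 0 := (hiff _).2 ⟨ν, hν, rfl⟩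
    have hsp := (KP.Klev_spec hm B hB (r + (ν : ZMod (2 * m)))).2
    rw [h0] at hsp
    simpa using hsp
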